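/- arXiv:1105.2062 — 6 statements merged into one kernel-verified Lean document; each statement's English description precedes it below -/
import Mathlib

section
/- For integer K ≥ 2, −∫_0^1 (log₂ ℓ) · K(K-1) ℓ (1-ℓ)^{K-2} dℓ = (1/ln 2) · ∑_{k=2}^{K} 1/k. -/
open MeasureTheory

lemma sum_aux_stmt3 (m : ℕ) : ∑ k ∈ Finset.Icc 2 (2+m), (1:ℝ)/k
    = (∑ j ∈ Finset.range (m+2), 1/((j:ℝ)+1)) - 1 := by
  induction m with
  | zero => norm_num
  | succ n ih =>
    rw [show 2 + (n+1) = (2+n) + 1 by ring, Finset.sum_Icc_succ_top (by omega),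
      show n + 1 + 2 = (n + 2) + 1 by ring, Finset.sum_range_succ, ih]
    push_cast
    ring

theorem stmt_3 (K : ℕ) (hK : 2 ≤ K) :
    -∫ ℓ in Set.Ioc (0:ℝ) 1,
        Real.logb 2 ℓ * ((K : ℝ) * ((K : ℝ) - 1) * ℓ * (1 - ℓ) ^ (K - 2)) =
      (1 / Real.log 2) * ∑ k ∈ Finset.Icc 2 K, (1 : ℝ) / k := by
  obtain ⟨m, rfl⟩ := Nat.exists_eq_add_of_le hK
  set h : ℝ → ℝ := fun x => (∑ j ∈ Finset.range (m+2), (1-x)^j) - ((m:ℝ)+2)*(1-x)^(m+1) with hh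
  set W : ℝ → ℝ := fun x => (∑ j ∈ Finset.range (m+2), -((1-x)^(j+1))/((j:ℝ)+1)) + (1-x)^(m+2) with hW
  set F : ℝ → ℝ := fun x => Real.log x * (x * h x) - W x with hF
  set f' : ℝ → ℝ := fun x => Real.log x * (((m:ℝ)+2) * (((m:ℝ)+1)) * x * (1-x)^m) with hf'
  -- key algebraic identity
  have key : ∀ x : ℝ, x * h x =
      (1 - (1-x)^(m+2)) - ((m:ℝ)+2)*(x*(1-x)^(m+1)) := by
    intro x
    have hg := geom_sum_mul (1-x) (m+2)
    simp only [hh]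
    ring_nf
    ring_nf at hg
    linarith
  -- derivative of x * h x
  have hu : ∀ x : ℝ, HasDerivAt (fun y : ℝ => 1 - y) (-1) x := fun x =>
    (hasDerivAt_id x).const_sub 1
  have hG' : ∀ x : ℝ, HasDerivAt (fun y => y * h y)
      (((m:ℝ)+2) * (((m:ℝ)+1)) * x * (1-x)^m) x := by
    intro x
    have h1 : HasDerivAt (fun y : ℝ => (1-y)^(m+2))
        (-(((m:ℝ)+2) * (1-x)^(m+1))) x := by
      have := (hu x).pow (m+2)
      refine this.congr_deriv ?_
      try simp only [id_eq, Nat.add_sub_cancel]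
      simp only [show m + 2 - 1 = m + 1 by omega]
      push_cast
      try ring
    have h2 : HasDerivAt (fun y : ℝ => y*(1-y)^(m+1))
        ((1-x)^(m+1) + x * (((m:ℝ)+1)*(1-x)^m*(-1))) x := by
      have := (hasDerivAt_id x).mul ((hu x).pow (m+1))
      refine this.congr_deriv ?_
      try simp only [id_eq, Nat.add_sub_cancel]
      simp only [Pi.pow_apply]
      push_cast
      try ring
    have h3 : HasDerivAt (fun y : ℝ => (1 - (1-y)^(m+2)) - ((m:ℝ)+2)*(y*(1-y)^(m+1)))
        (((m:ℝ)+2) * (((m:ℝ)+1)) * x * (1-x)^m) x := by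
      have := (h1.const_sub 1).sub (h2.const_mul ((m:ℝ)+2))
      refine this.congr_deriv ?_
      ring
    have heq : (fun y => y * h y) =
        (fun y : ℝ => (1 - (1-y)^(m+2)) - ((m:ℝ)+2)*(y*(1-y)^(m+1))) := funext key
    rw [heq]
    exact h3
  -- derivative of W
  have hW' : ∀ x : ℝ, HasDerivAt W (h x) x := by
    intro x
    have hsum : HasDerivAt (fun y : ℝ => ∑ j ∈ Finset.range (m+2), -((1-y)^(j+1))/((j:ℝ)+1))
        (∑ j ∈ Finset.range (m+2), (1-x)^j) x := by
      apply HasDerivAt.fun_sum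
      intro j _
      have := (((hu x).pow (j+1)).neg).div_const ((j:ℝ)+1)
      refine this.congr_deriv ?_
      have hj : ((j:ℝ)+1) ≠ 0 := by positivity
      try simp only [id_eq, Nat.add_sub_cancel]
      push_cast
      field_simp
    have hpow : HasDerivAt (fun y : ℝ => (1-y)^(m+2))
        (-(((m:ℝ)+2) * (1-x)^(m+1))) x := by
      have := (hu x).pow (m+2)
      refine this.congr_deriv ?_
      try simp only [id_eq, Nat.add_sub_cancel]
      simp only [show m + 2 - 1 = m + 1 by omega]
      push_cast
      try ring
    have := hsum.add hpow
    refine this.congr_deriv ?_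
    try simp only [hh, h]
    try ring
  -- derivative of F on Ioo 0 1
  have hFderiv : ∀ x ∈ Set.Ioo (0:ℝ) 1, HasDerivAt F (f' x) x := by
    intro x hx
    have hlog := Real.hasDerivAt_log (ne_of_gt hx.1)
    have hx0 : x ≠ 0 := ne_of_gt hx.1
    have := (hlog.mul (hG' x)).sub (hW' x)
    refine this.congr_deriv ?_
    simp only [hf']
    field_simp
    ring
  -- integrability of f'
  have hint : IntervalIntegrable f' volume 0 1 := by
    rw [intervalIntegrable_iff_integrableOn_Ioc_of_le zero_le_one]
    have hg : IntegrableOn (fun x : ℝ => ((m:ℝ)+2) * (((m:ℝ)+1)) * (2 * x ^ (-(1/2) : ℝ)))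
        (Set.Ioc 0 1) := by
      have : IntervalIntegrable (fun x : ℝ => x ^ (-(1/2) : ℝ)) volume 0 1 :=
        intervalIntegral.intervalIntegrable_rpow' (by norm_num)
      rw [intervalIntegrable_iff_integrableOn_Ioc_of_le zero_le_one] at this
      exact (this.const_mul 2).const_mul (((m:ℝ)+2) * (((m:ℝ)+1)))
    refine Integrable.mono' hg ?_ ?_
    · apply Measurable.aestronglyMeasurable
      apply Real.measurable_log.mul
      fun_prop
    · filter_upwards [ae_restrict_mem measurableSet_Ioc] with x hx
      have hx0 : 0 < x := hx.1
      have hx1 : x ≤ 1 := hx.2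
      have hlog : |Real.log x| ≤ 2 * x ^ (-(1/2) : ℝ) := by
        have habs := Real.abs_log_mul_self_rpow_lt x (1/2) hx0 hx1 (by norm_num)
        rw [abs_mul, abs_of_pos (Real.rpow_pos_of_pos hx0 _)] at habs
        have hp : (0:ℝ) < x ^ ((1:ℝ)/2) := Real.rpow_pos_of_pos hx0 _
        have hle : |Real.log x| ≤ 2 / x ^ ((1:ℝ)/2) := by
          rw [le_div_iff₀ hp]
          norm_num at habs
          linarith
        calc |Real.log x| ≤ 2 / x ^ ((1:ℝ)/2) := hle
          _ = 2 * x ^ (-(1/2) : ℝ) := by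
            rw [Real.rpow_neg hx0.le, div_eq_mul_inv]
      have hP : |((m:ℝ)+2) * (((m:ℝ)+1)) * x * (1-x)^m| ≤ ((m:ℝ)+2) * (((m:ℝ)+1)) := by
        have h1x : (0:ℝ) ≤ 1 - x := by linarith
        have hpow : (1-x)^m ≤ 1 := pow_le_one₀ h1x (by linarith)
        have hnn : (0:ℝ) ≤ ((m:ℝ)+2) * (((m:ℝ)+1)) * x * (1-x)^m := by positivity
        rw [abs_of_nonneg hnn]
        have hx01 : x*(1-x)^m ≤ 1 :=
          mul_le_one₀ hx1 (pow_nonneg h1x m) hpow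
        nlinarith [mul_le_mul_of_nonneg_left hx01
          (show (0:ℝ) ≤ ((m:ℝ)+2)*((m:ℝ)+1) by positivity)]
      calc ‖f' x‖ = |Real.log x| * |((m:ℝ)+2) * (((m:ℝ)+1)) * x * (1-x)^m| := by
            simp only [hf', Real.norm_eq_abs, abs_mul]
        _ ≤ (2 * x ^ (-(1/2) : ℝ)) * (((m:ℝ)+2) * (((m:ℝ)+1))) :=
            mul_le_mul hlog hP (abs_nonneg _) (by positivity)
        _ = ((m:ℝ)+2) * (((m:ℝ)+1)) * (2 * x ^ (-(1/2) : ℝ)) := by ring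
  -- continuity of h and W
  have hcont : Continuous h := by
    simp only [hh]
    fun_prop
  have hWcont : Continuous W := by
    simp only [hW]
    fun_prop
  -- limit at 0
  have hlim0 : Filter.Tendsto F (nhdsWithin 0 (Set.Ioi 0)) (nhds (0 * h 0 - W 0)) := by
    have hlx : Filter.Tendsto (fun x : ℝ => Real.log x * x)
        (nhdsWithin 0 (Set.Ioi 0)) (nhds 0) := by
      have := tendsto_log_mul_rpow_nhdsGT_zero (r := 1) one_pos
      simpa using this
    have h1 : Filter.Tendsto (fun x : ℝ => Real.log x * x * h x)
        (nhdsWithin 0 (Set.Ioi 0)) (nhds (0 * h 0)) :=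
      hlx.mul ((hcont.tendsto 0).mono_left nhdsWithin_le_nhds)
    have h2 := h1.sub ((hWcont.tendsto 0).mono_left nhdsWithin_le_nhds)
    refine h2.congr (fun x => ?_)
    simp only [hF]; ring
  -- limit at 1
  have hlim1 : Filter.Tendsto F (nhdsWithin 1 (Set.Iio 1)) (nhds (F 1)) := by
    have : ContinuousAt F 1 := by
      apply ContinuousAt.sub
      · exact ((Real.continuousAt_log one_ne_zero).mul
          ((continuous_id.mul hcont).continuousAt))
      · exact hWcont.continuousAt
    exact this.continuousWithinAt.tendsto
  have hFTC := intervalIntegral.integral_eq_sub_of_hasDerivAt_of_tendsto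
    zero_lt_one hFderiv hint hlim0 hlim1
  -- values
  have hW1 : W 1 = 0 := by
    simp only [hW]
    simp
  have hF1 : F 1 = 0 := by
    simp only [hF, hW1, Real.log_one]
    ring
  have hW0 : W 0 = 1 - ∑ j ∈ Finset.range (m+2), 1/((j:ℝ)+1) := by
    simp [hW, neg_div]
    ring
  -- sum identity
  have hsum := sum_aux_stmt3 m
  -- finish
  rw [← intervalIntegral.integral_of_le zero_le_one]
  have hcast : ∀ ℓ : ℝ, Real.logb 2 ℓ * (((2+m : ℕ) : ℝ) * (((2+m : ℕ) : ℝ) - 1) * ℓ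
      * (1 - ℓ) ^ (2 + m - 2)) = (1 / Real.log 2) * f' ℓ := by
    intro ℓ
    have : 2 + m - 2 = m := by omega
    rw [this]
    simp only [hf', Real.logb]
    push_cast
    ring
  rw [intervalIntegral.integral_congr (fun x _ => hcast x)]
  rw [intervalIntegral.integral_const_mul, hFTC, hF1, hW0, hsum]
  ring
end

section
/- Let K−1 thresholds be drawn i.i.d. uniform on [0,1], sorted as a_1 ≤ ... ≤ a_{K-1}, with a_0 = 0, a_K = 1. Then E[−∑_{k=1}^K (a_k − a_{k-1}) log₂(a_k − a_{k-1})] = (1/ln 2) ∑_{k=2}^K 1/k. -/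
open MeasureTheory ProbabilityTheory

open Real MeasureTheory Set ProbabilityTheory
open scoped Interval ENNReal

lemma neg_log_le_aux {x : ℝ} (hx : x ∈ Set.Ioc (0:ℝ) 1) :
    ‖Real.log x‖ ≤ ‖2 * x ^ (-(1/2) : ℝ)‖ := by
  obtain ⟨hx0, hx1⟩ := hx
  have hy : 0 < x ^ (-(1/2) : ℝ) := Real.rpow_pos_of_pos hx0 _
  have hlogy : Real.log (x ^ (-(1/2) : ℝ)) = (-(1/2)) * Real.log x :=
    Real.log_rpow hx0 _
  have h1 : Real.log (x ^ (-(1/2) : ℝ)) ≤ x ^ (-(1/2) : ℝ) - 1 :=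
    Real.log_le_sub_one_of_pos hy
  have hlx : Real.log x ≤ 0 := Real.log_nonpos (le_of_lt hx0) hx1
  rw [Real.norm_eq_abs, Real.norm_eq_abs, abs_of_nonpos hlx, abs_of_pos (by positivity)]
  nlinarith [hy]

lemma log_intervalIntegrable {Δ : ℝ} (h0 : 0 ≤ Δ) (h1 : Δ ≤ 1) :
    IntervalIntegrable Real.log volume 0 Δ := by
  rw [intervalIntegrable_iff_integrableOn_Ioc_of_le h0]
  have hg : IntegrableOn (fun x : ℝ => 2 * x ^ (-(1/2) : ℝ)) (Set.Ioc 0 Δ) volume := by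
    have := (intervalIntegral.intervalIntegrable_rpow' (a := 0) (b := Δ) (r := -(1/2)) (by norm_num)).const_mul 2
    rwa [intervalIntegrable_iff_integrableOn_Ioc_of_le h0] at this
  refine Integrable.mono hg (Real.measurable_log.aestronglyMeasurable.restrict) ?_
  filter_upwards [ae_restrict_mem measurableSet_Ioc] with x hx
  exact neg_log_le_aux ⟨hx.1, le_trans hx.2 h1⟩

lemma integral_log_from_zero_aux {Δ : ℝ} (h0 : 0 ≤ Δ) (h1 : Δ ≤ 1) :
    ∫ x in (0:ℝ)..Δ, Real.log x = Δ * Real.log Δ - Δ := by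
  have h := intervalIntegral.integral_eq_sub_of_hasDeriv_right_of_le h0
    (f := fun x => x * Real.log x - x) (f' := Real.log)
    ?_ ?_ (log_intervalIntegrable h0 h1)
  · rw [h]; simp
  · exact ((Real.continuous_mul_log.sub continuous_id).continuousOn)
  · intro x hx
    have : HasDerivAt (fun x => x * Real.log x - x) (Real.log x + 1 - 1) x :=
      (Real.hasDerivAt_mul_log (ne_of_gt hx.1)).sub (hasDerivAt_id x)
    simpa using this.hasDerivWithinAt

-- conversion: lintegral over Ioc of ofReal of nonneg interval-integrable = ofReal of interval integral
lemma lintegral_ofReal_Ioc {a b : ℝ} (hab : a ≤ b) {f : ℝ → ℝ}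
    (hf : IntervalIntegrable f volume a b) (h0 : ∀ x ∈ Set.Ioc a b, 0 ≤ f x) :
    ∫⁻ u in Set.Ioc a b, ENNReal.ofReal (f u) = ENNReal.ofReal (∫ u in a..b, f u) := by
  rw [intervalIntegral.integral_of_le hab]
  rw [ofReal_integral_eq_lintegral_ofReal]
  · exact (intervalIntegrable_iff_integrableOn_Ioc_of_le hab).1 hf
  · filter_upwards [ae_restrict_mem measurableSet_Ioc] with x hx using h0 x hx

lemma lintegral_inv_Ioc {a : ℝ} (ha : 0 < a) (ha1 : a ≤ 1) :
    ∫⁻ u in Set.Ioc a 1, ENNReal.ofReal u⁻¹ = ENNReal.ofReal (-Real.log a) := by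
  have h0 : (0:ℝ) ∉ [[a, 1]] := by
    rw [Set.mem_uIcc]; push_neg; constructor <;> intro h <;> linarith
  rw [lintegral_ofReal_Ioc ha1 (intervalIntegrable_inv_iff.mpr (Or.inr h0)) ?_]
  · rw [integral_inv h0]
    rw [Real.log_div one_ne_zero (ne_of_gt ha)]
    norm_num
  · intro x hx
    exact inv_nonneg.mpr (le_of_lt (lt_trans ha hx.1))

lemma indicator_inv_lint {D : ℝ} (hD : 0 < D) (hD1 : D ≤ 1) :
    ∫⁻ u in Set.Ioc 0 1, (Set.Ioi D).indicator (fun u => ENNReal.ofReal u⁻¹) u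
      = ENNReal.ofReal (-Real.log D) := by
  rw [lintegral_indicator measurableSet_Ioi, Measure.restrict_restrict measurableSet_Ioi]
  have : Set.Ioi D ∩ Set.Ioc 0 1 = Set.Ioc D 1 := by
    ext x; simp only [Set.mem_inter_iff, Set.mem_Ioi, Set.mem_Ioc]
    constructor
    · rintro ⟨h1, _, h3⟩; exact ⟨h1, h3⟩
    · rintro ⟨h1, h2⟩; exact ⟨h1, lt_trans hD h1, h2⟩
  rw [this, lintegral_inv_Ioc hD hD1]

-- ∫ t in Ioo a (a+Δ), -log (t - a) = Δ - Δ log Δ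
lemma integral_neg_log_Ioo {a d : ℝ} (h0 : 0 ≤ d) (h1 : d ≤ 1) :
    ∫ t in Set.Ioo a (a + d), (-Real.log (t - a)) = d - d * Real.log d := by
  rw [← integral_Ioc_eq_integral_Ioo, ← intervalIntegral.integral_of_le (by linarith)]
  have : ∀ t, -Real.log (t - a) = (fun x => -Real.log x) (t - a) := fun t => rfl
  rw [show (fun t => -Real.log (t - a)) = (fun t => (fun x => -Real.log x) (t - a)) from rfl]
  rw [intervalIntegral.integral_comp_sub_right (fun x => -Real.log x) a]
  simp only [sub_self, add_sub_cancel_left]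
  rw [intervalIntegral.integral_neg, integral_log_from_zero_aux h0 h1]
  ring

lemma integrableOn_neg_log_Ioo {a d : ℝ} (h0 : 0 ≤ d) (h1 : d ≤ 1) :
    IntegrableOn (fun t => -Real.log (t - a)) (Set.Ioo a (a + d)) volume := by
  have h : IntervalIntegrable (fun t => -Real.log (t - a)) volume a (a + d) := by
    have := ((log_intervalIntegrable h0 h1).neg).comp_sub_right a
    simpa [add_comm] using this
  rw [intervalIntegrable_iff_integrableOn_Ioo_of_le (by linarith)] at h
  exact h

lemma geom_aux {u : ℝ} (hu : u ≠ 0) (n : ℕ) :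
    u⁻¹ * (1 - (1 - u) ^ n) = ∑ j ∈ Finset.range n, (1 - u) ^ j := by
  have h := geom_sum_mul (1 - u) n
  field_simp
  linarith [h]

lemma integral_pow_shift {s : ℝ} (j : ℕ) :
    ∫ u in (0:ℝ)..s, (1 - u) ^ j = (1 - (1 - s) ^ (j + 1)) / (j + 1) := by
  rw [show (fun u : ℝ => (1 - u) ^ j) = (fun u : ℝ => (fun x : ℝ => x ^ j) (1 - u)) from rfl]
  rw [intervalIntegral.integral_comp_sub_left (fun x : ℝ => x ^ j) 1]
  rw [integral_pow]
  simp [sub_zero]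

noncomputable def gfun {n : ℕ} (c : Fin n → ℝ) : ℝ × ℝ → ℝ≥0∞ :=
  {p : ℝ × ℝ | p.1 < p.2 ∨ ∃ i, c i ∈ Set.Ioc (p.1 - p.2) p.1}.indicator
    (fun p => ENNReal.ofReal p.2⁻¹)

section path
variable {K : ℕ} (hK : 2 ≤ K) (a : ℕ → ℝ) (ha0 : a 0 = 0) (haK : a K = 1)
  (hmono : ∀ i j, i ≤ j → j ≤ K → a i ≤ a j) (c : Fin (K - 1) → ℝ)
  (hcor : ∀ i, ∃ m : Fin (K - 1), c i = a (m + 1))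
  (hcor2 : ∀ m : Fin (K - 1), ∃ i, c i = a ((m : ℕ) + 1))

include hK ha0 hmono hcor hcor2 in
lemma gfun_eq {k : ℕ} (hk : k < K) {s : ℝ} (hs : s ∈ Set.Ioo (a k) (a (k + 1))) (u : ℝ) :
    gfun c (s, u) = (Set.Ioi (s - a k)).indicator (fun v => ENNReal.ofReal v⁻¹) u := by
  have hiff : (s < u ∨ ∃ i, c i ∈ Set.Ioc (s - u) s) ↔ s - a k < u := by
    constructor
    · rintro (h | ⟨i, hi1, hi2⟩)
      · have : 0 ≤ a k := ha0 ▸ hmono 0 k (Nat.zero_le _) (le_of_lt hk)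
        linarith
      · obtain ⟨m, hm⟩ := hcor i
        have hmK : (m : ℕ) + 1 ≤ K := by have := m.2; omega
        have h1 : a ((m : ℕ) + 1) ≤ a k := by
          by_contra hcon
          push_neg at hcon
          have hkm : k + 1 ≤ (m : ℕ) + 1 := by
            by_contra hc2
            push_neg at hc2
            exact absurd (hmono ((m:ℕ)+1) k (by omega) (le_of_lt hk)) (not_le.mpr hcon)
          have := hmono (k+1) ((m:ℕ)+1) hkm hmK
          rw [hm] at hi2
          linarith [hs.2]
        rw [hm] at hi1
        linarith
    · intro h
      rcases Nat.eq_zero_or_pos k with hk0 | hk0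
      · subst hk0
        rw [ha0] at h
        exact Or.inl (by linarith)
      · right
        obtain ⟨i, hi⟩ := hcor2 ⟨k - 1, by omega⟩
        refine ⟨i, ?_, ?_⟩ <;> rw [hi] <;> simp only [] <;>
          rw [show (k - 1 : ℕ) + 1 = k by omega]
        · linarith
        · exact le_of_lt hs.1
  unfold gfun
  rw [Set.indicator_apply, Set.indicator_apply]
  simp only [Set.mem_setOf_eq, Set.mem_Ioi]
  rw [if_congr hiff rfl rfl]

include hK ha0 haK hmono hcor hcor2 in
lemma inner_eq {k : ℕ} (hk : k < K) {s : ℝ} (hs : s ∈ Set.Ioo (a k) (a (k + 1))) :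
    ∫⁻ u in Set.Ioc (0:ℝ) 1, gfun c (s, u) = ENNReal.ofReal (-Real.log (s - a k)) := by
  have hak0 : 0 ≤ a k := ha0 ▸ hmono 0 k (Nat.zero_le _) (le_of_lt hk)
  have hak1 : a (k + 1) ≤ 1 := haK ▸ hmono (k+1) K hk (le_refl _)
  have hD0 : 0 < s - a k := by linarith [hs.1]
  have hD1 : s - a k ≤ 1 := by linarith [hs.2]
  calc ∫⁻ u in Set.Ioc (0:ℝ) 1, gfun c (s, u)
      = ∫⁻ u in Set.Ioc (0:ℝ) 1,
          (Set.Ioi (s - a k)).indicator (fun v => ENNReal.ofReal v⁻¹) u := by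
        refine setLIntegral_congr_fun measurableSet_Ioc ?_
        intro u _
        exact gfun_eq hK a ha0 hmono c hcor hcor2 hk hs u
    _ = ENNReal.ofReal (-Real.log (s - a k)) := indicator_inv_lint hD0 hD1

include ha0 haK hmono in
lemma exists_eq_of_not_mem {s : ℝ} (hs0 : 0 < s) (hs1 : s ≤ 1)
    (h : ∀ k, k < K → s ∉ Set.Ioo (a k) (a (k + 1))) : ∃ m, m ≤ K ∧ s = a m := by
  have key : ∀ j, j ≤ K → s ≤ a j → ∃ m, m ≤ j ∧ s = a m := by
    intro j
    induction j with
    | zero => intro _ hle; rw [ha0] at hle; linarith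
    | succ j ih =>
      intro hjK hle
      rcases le_or_gt s (a j) with h1 | h1
      · obtain ⟨m, hm1, hm2⟩ := ih (by omega) h1
        exact ⟨m, by omega, hm2⟩
      · have := h j (by omega)
        simp only [Set.mem_Ioo, not_and, not_lt] at this
        have h2 := this h1
        exact ⟨j + 1, le_refl _, le_antisymm hle h2⟩
  exact key K (le_refl _) (by rw [haK]; exact hs1)

include hK ha0 haK hmono hcor hcor2 in
lemma pathwise :
    ∫⁻ s in Set.Ioc (0:ℝ) 1, ∫⁻ u in Set.Ioc (0:ℝ) 1, gfun c (s, u) =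
      ENNReal.ofReal (1 - ∑ k ∈ Finset.range K,
        (a (k + 1) - a k) * Real.log (a (k + 1) - a k)) := by
  have hak0 : ∀ k, k ≤ K → 0 ≤ a k := fun k hkK => ha0 ▸ hmono 0 k (Nat.zero_le _) hkK
  have hak1 : ∀ k, k ≤ K → a k ≤ 1 := fun k hkK => haK ▸ hmono k K hkK (le_refl _)
  set Fa : ℝ → ℝ := fun s => ∑ k ∈ Finset.range K,
    (Set.Ioo (a k) (a (k + 1))).indicator (fun t => -Real.log (t - a k)) s with hFa
  have hFanonneg : ∀ s, 0 ≤ Fa s := by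
    intro s
    refine Finset.sum_nonneg fun k hk => Set.indicator_nonneg (fun t ht => ?_) s
    simp only [Finset.mem_range] at hk
    have h1 : 0 < t - a k := by linarith [ht.1]
    have h2 : t - a k ≤ 1 := by
      have := hak1 (k+1) hk
      have := hak0 k (le_of_lt hk)
      linarith [ht.2]
    simpa using Real.log_nonpos (le_of_lt h1) h2
  have hFaint : ∀ k ∈ Finset.range K, Integrable
      ((Set.Ioo (a k) (a (k + 1))).indicator (fun t => -Real.log (t - a k))) volume := by
    intro k hk
    simp only [Finset.mem_range] at hk
    have hd0 : 0 ≤ a (k+1) - a k := by linarith [hmono k (k+1) (le_of_lt (Nat.lt_succ_self k)) hk]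
    have hd1 : a (k+1) - a k ≤ 1 := by
      have := hak1 (k+1) hk; have := hak0 k (le_of_lt hk); linarith
    have := (integrableOn_neg_log_Ioo (a := a k) hd0 hd1).integrable_indicator measurableSet_Ioo
    simpa [show a k + (a (k+1) - a k) = a (k+1) by ring] using this
  have hFaInt : Integrable Fa volume := by
    rw [hFa]
    have := MeasureTheory.integrable_finset_sum (μ := volume) (Finset.range K)
      (fun k hk => hFaint k hk)
    convert this using 1
  -- step A : a.e. congruence
  have stepA : ∫⁻ s in Set.Ioc (0:ℝ) 1, ∫⁻ u in Set.Ioc (0:ℝ) 1, gfun c (s, u)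
      = ∫⁻ s in Set.Ioc (0:ℝ) 1, ENNReal.ofReal (Fa s) := by
    have hnull : volume (Set.range a) = 0 :=
      Set.Countable.measure_zero (Set.countable_range a) _
    refine lintegral_congr_ae ?_
    have hmem := ae_restrict_mem (μ := volume) (measurableSet_Ioc (a := (0:ℝ)) (b := 1))
    have hnr : ∀ᵐ s ∂(volume.restrict (Set.Ioc (0:ℝ) 1)), s ∉ Set.range a :=
      ae_restrict_of_ae (measure_mono_null (fun s hs => by simpa using hs) hnull)
    filter_upwards [hmem, hnr] with s hs hsr
    have hIoo : ∃ k, k < K ∧ s ∈ Set.Ioo (a k) (a (k + 1)) := by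
      by_contra hcon
      push_neg at hcon
      obtain ⟨m, _, hm⟩ := exists_eq_of_not_mem a ha0 haK hmono hs.1 hs.2
        (fun k hk => hcon k hk)
      exact hsr ⟨m, hm.symm⟩
    obtain ⟨k, hk, hsk⟩ := hIoo
    rw [inner_eq hK a ha0 haK hmono c hcor hcor2 hk hsk]
    congr 1
    show _ = ∑ k ∈ Finset.range K, (Set.Ioo (a k) (a (k + 1))).indicator (fun t => -Real.log (t - a k)) s
    rw [Finset.sum_eq_single k]
    · rw [Set.indicator_of_mem hsk]
    · intro j hj hjk
      simp only [Finset.mem_range] at hj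
      refine Set.indicator_of_notMem ?_ _
      simp only [Set.mem_Ioo, not_and, not_lt]
      intro hja
      rcases lt_or_gt_of_ne hjk with h1 | h1
      · have := hmono (j+1) k h1 (le_of_lt hk)
        linarith [hsk.1]
      · exfalso
        have := hmono (k+1) j h1 (le_of_lt hj)
        linarith [hsk.2]
    · intro hc; exact absurd (Finset.mem_range.mpr hk) hc
  rw [stepA]
  -- step B : convert to Bochner integral
  rw [← ofReal_integral_eq_lintegral_ofReal hFaInt.restrict
    (Filter.Eventually.of_forall hFanonneg)]
  congr 1
  -- step C : compute the integral
  have : ∫ s in Set.Ioc (0:ℝ) 1, Fa s =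
      ∑ k ∈ Finset.range K, ((a (k+1) - a k) - (a (k+1) - a k) * Real.log (a (k+1) - a k)) := by
    rw [hFa, integral_finset_sum _ (fun k hk => (hFaint k hk).restrict)]
    refine Finset.sum_congr rfl fun k hk => ?_
    simp only [Finset.mem_range] at hk
    rw [setIntegral_indicator measurableSet_Ioo]
    have hsub : Set.Ioc (0:ℝ) 1 ∩ Set.Ioo (a k) (a (k+1)) = Set.Ioo (a k) (a (k+1)) := by
      refine Set.inter_eq_self_of_subset_right fun t ht => ?_
      have h1 := hak0 k (le_of_lt hk)
      have h2 := hak1 (k+1) hk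
      exact ⟨by linarith [ht.1], by linarith [ht.2]⟩
    rw [hsub]
    have hd0 : 0 ≤ a (k+1) - a k := by linarith [hmono k (k+1) (le_of_lt (Nat.lt_succ_self k)) hk]
    have hd1 : a (k+1) - a k ≤ 1 := by
      have := hak1 (k+1) hk; have := hak0 k (le_of_lt hk); linarith
    have := integral_neg_log_Ioo (a := a k) hd0 hd1
    rw [show a k + (a (k+1) - a k) = a (k+1) by ring] at this
    rw [this]
  rw [this, Finset.sum_sub_distrib, Finset.sum_range_sub (f := a), ha0, haK]
  ring

end path

lemma term_nonneg {s : ℝ} (hs0 : 0 ≤ s) (hs1 : s ≤ 1) (j : ℕ) :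
    0 ≤ (1 - (1 - s) ^ (j + 1)) / ((j : ℝ) + 1) := by
  apply div_nonneg _ (by positivity)
  have h1 : (1 - s) ^ (j+1) ≤ 1 := pow_le_one₀ (by linarith) (by linarith)
  linarith

lemma q_intervalIntegrable (n : ℕ) :
    IntervalIntegrable (fun s => ∑ j ∈ Finset.range n,
      (1 - (1 - s) ^ (j + 1)) / ((j : ℝ) + 1)) volume 0 1 := by
  apply Continuous.intervalIntegrable
  refine continuous_finset_sum _ fun j _ => ?_
  fun_prop

lemma Rn_lintegral (n : ℕ) :
    ∫⁻ s in Set.Ioc (0:ℝ) 1, ENNReal.ofReal ((∑ j ∈ Finset.range n,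
        (1 - (1 - s) ^ (j + 1)) / ((j : ℝ) + 1)) - Real.log s)
      = ENNReal.ofReal (∑ j ∈ Finset.range n, (1:ℝ)/((j:ℝ)+2) + 1) := by
  have hint : IntervalIntegrable (fun s => (∑ j ∈ Finset.range n,
      (1 - (1 - s) ^ (j + 1)) / ((j : ℝ) + 1)) - Real.log s) volume 0 1 :=
    (q_intervalIntegrable n).sub (log_intervalIntegrable zero_le_one le_rfl)
  rw [lintegral_ofReal_Ioc zero_le_one hint ?_]
  · congr 1
    rw [intervalIntegral.integral_sub (q_intervalIntegrable n)
      (log_intervalIntegrable zero_le_one le_rfl)]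
    rw [integral_log_from_zero_aux zero_le_one le_rfl]
    rw [intervalIntegral.integral_finset_sum]
    · have : ∀ j ∈ Finset.range n, ∫ s in (0:ℝ)..1,
          (1 - (1 - s) ^ (j + 1)) / ((j : ℝ) + 1) = 1/((j:ℝ)+2) := by
        intro j _
        rw [intervalIntegral.integral_div]
        rw [intervalIntegral.integral_sub intervalIntegrable_const ?_]
        · rw [integral_pow_shift (j+1)]
          simp only [sub_self, zero_pow (Nat.succ_ne_zero (j+1))]
          rw [intervalIntegral.integral_const]
          push_cast
          have h2 : (j:ℝ) + 1 + 1 ≠ 0 := by positivity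
          have h1 : (j:ℝ) + 1 ≠ 0 := by positivity
          field_simp
          ring
        · apply Continuous.intervalIntegrable; fun_prop
      rw [Finset.sum_congr rfl this]
      simp only [Real.log_one]
      ring
    · intro j _; apply Continuous.intervalIntegrable; fun_prop
  · intro s hs
    have h1 : 0 ≤ ∑ j ∈ Finset.range n, (1 - (1 - s) ^ (j + 1)) / ((j : ℝ) + 1) :=
      Finset.sum_nonneg fun j _ => term_nonneg (le_of_lt hs.1) hs.2 j
    have h2 : Real.log s ≤ 0 := Real.log_nonpos (le_of_lt hs.1) hs.2
    linarith

theorem stmt_9 {Ω : Type*} [MeasurableSpace Ω] (P : Measure Ω) [IsProbabilityMeasure P]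
    (K : ℕ) (hK : 2 ≤ K) (b : Fin (K - 1) → Ω → ℝ)
    (hmeas : ∀ i, Measurable (b i))
    (hunif : ∀ i, Measure.map (b i) P = volume.restrict (Set.Icc 0 1))
    (hindep : iIndepFun b P)
    (A : Ω → ℕ → ℝ)
    (hA0 : ∀ ω, A ω 0 = 0) (hAK : ∀ ω, A ω K = 1)
    (hmono : ∀ ω, ∀ i j, i ≤ j → j ≤ K → A ω i ≤ A ω j)
    (hsort : ∀ ω, ∃ σ : Equiv.Perm (Fin (K - 1)),
      ∀ i : Fin (K - 1), A ω ((i : ℕ) + 1) = b (σ i) ω) :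
    ∫ ω, (-∑ k ∈ Finset.range K,
        (A ω (k + 1) - A ω k) * Real.logb 2 (A ω (k + 1) - A ω k)) ∂P =
      (1 / Real.log 2) * ∑ k ∈ Finset.Icc 2 K, (1 : ℝ) / k := by
  classical
  set ν : Measure ℝ := volume.restrict (Set.Ioc (0:ℝ) 1) with hν
  set W : Ω → ℝ := fun ω => -∑ k ∈ Finset.range K,
      (A ω (k + 1) - A ω k) * Real.log (A ω (k + 1) - A ω k) with hW
  set C₀ : ℝ := ∑ j ∈ Finset.range (K-1), (1:ℝ)/((j:ℝ)+2) with hC₀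
  have hC₀nn : 0 ≤ C₀ := Finset.sum_nonneg fun j _ => by positivity
  -- measurability of the master function
  have hGmeas : Measurable (fun q : (ℝ × ℝ) × Ω => gfun (fun i => b i q.2) q.1) := by
    have heq : (fun q : (ℝ × ℝ) × Ω => gfun (fun i => b i q.2) q.1) =
        Set.indicator {q : (ℝ × ℝ) × Ω |
            q.1.1 < q.1.2 ∨ ∃ i, b i q.2 ∈ Set.Ioc (q.1.1 - q.1.2) q.1.1}
          (fun q => ENNReal.ofReal q.1.2⁻¹) := by
      funext q
      simp only [gfun, Set.indicator_apply, Set.mem_setOf_eq]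
    rw [heq]
    refine Measurable.indicator (by fun_prop) ?_
    have : {q : (ℝ × ℝ) × Ω |
        q.1.1 < q.1.2 ∨ ∃ i, b i q.2 ∈ Set.Ioc (q.1.1 - q.1.2) q.1.1}
        = {q : (ℝ × ℝ) × Ω | q.1.1 < q.1.2} ∪
          ⋃ i, ({q : (ℝ × ℝ) × Ω | q.1.1 - q.1.2 < b i q.2} ∩
            {q : (ℝ × ℝ) × Ω | b i q.2 ≤ q.1.1}) := by
      ext q
      simp only [Set.mem_setOf_eq, Set.mem_union, Set.mem_iUnion, Set.mem_inter_iff,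
        Set.mem_Ioc]
    rw [this]
    refine MeasurableSet.union ?_ (MeasurableSet.iUnion fun i => ?_)
    · exact measurableSet_lt measurable_fst.fst measurable_fst.snd
    · exact (measurableSet_lt (measurable_fst.fst.sub measurable_fst.snd)
        ((hmeas i).comp measurable_snd)).inter
        (measurableSet_le ((hmeas i).comp measurable_snd) measurable_fst.fst)
  have hFmeas : Measurable (fun p : Ω × ℝ => ∫⁻ u, gfun (fun i => b i p.1) (p.2, u) ∂ν) := by
    refine Measurable.lintegral_prod_right'
      (f := fun p : (Ω × ℝ) × ℝ => gfun (fun i => b i p.1.1) (p.1.2, p.2)) ?_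
    exact hGmeas.comp ((measurable_fst.snd.prodMk measurable_snd).prodMk
      measurable_fst.fst)
  have hJmeas : Measurable (fun ω => ∫⁻ s, ∫⁻ u, gfun (fun i => b i ω) (s, u) ∂ν ∂ν) :=
    Measurable.lintegral_prod_right' hFmeas
  -- pathwise identity
  have hJ : ∀ ω, ∫⁻ s, ∫⁻ u, gfun (fun i => b i ω) (s, u) ∂ν ∂ν
      = ENNReal.ofReal (1 + W ω) := by
    intro ω
    obtain ⟨σ, hσ⟩ := hsort ω
    have h := pathwise hK (A ω) (hA0 ω) (hAK ω) (hmono ω) (fun i => b i ω)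
      (fun i => ⟨σ.symm i, by
        have := hσ (σ.symm i); rw [Equiv.apply_symm_apply] at this; exact this.symm⟩)
      (fun m => ⟨σ m, (hσ m).symm⟩)
    rw [hν]
    rw [h]
    congr 1
  have hWnonneg : ∀ ω, 0 ≤ W ω := by
    intro ω
    rw [hW]
    refine neg_nonneg.mpr (Finset.sum_nonpos fun k hk => ?_)
    simp only [Finset.mem_range] at hk
    have h0 : 0 ≤ A ω (k+1) - A ω k := by
      linarith [hmono ω k (k+1) (Nat.le_succ k) hk]
    have h1 : A ω (k+1) - A ω k ≤ 1 := by
      have := hAK ω ▸ hmono ω (k+1) K hk le_rfl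
      have := hA0 ω ▸ hmono ω 0 k (Nat.zero_le k) (le_of_lt hk)
      linarith
    exact mul_nonpos_of_nonneg_of_nonpos h0 (Real.log_nonpos h0 h1)
  have hWmeas : Measurable W := by
    have : W = fun ω =>
        (∫⁻ s, ∫⁻ u, gfun (fun i => b i ω) (s, u) ∂ν ∂ν).toReal - 1 := by
      funext ω
      rw [hJ ω, ENNReal.toReal_ofReal (by linarith [hWnonneg ω])]
      ring
    rw [this]
    exact (hJmeas.ennreal_toReal).sub measurable_const
  -- the key probabilistic computation, per s
  have hQ1 : ∀ s ∈ Set.Ioc (0:ℝ) 1,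
      (∫⁻ u, ∫⁻ ω, gfun (fun i => b i ω) (s, u) ∂P ∂ν)
      = ENNReal.ofReal ((∑ j ∈ Finset.range (K-1),
          (1 - (1 - s) ^ (j + 1)) / ((j : ℝ) + 1)) - Real.log s) := by
    intro s hs
    have hind : ∀ u : ℝ, (fun ω => gfun (fun i => b i ω) (s, u)) =
        Set.indicator {ω | s < u ∨ ∃ i, b i ω ∈ Set.Ioc (s - u) s}
          (fun _ => ENNReal.ofReal u⁻¹) := by
      intro u; funext ω
      simp only [gfun, Set.indicator_apply, Set.mem_setOf_eq]
    have hEmeas : ∀ u : ℝ, MeasurableSet {ω | s < u ∨ ∃ i, b i ω ∈ Set.Ioc (s - u) s} := by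
      intro u
      have : {ω | s < u ∨ ∃ i, b i ω ∈ Set.Ioc (s - u) s}
          = {ω | s < u} ∪ ⋃ i, b i ⁻¹' (Set.Ioc (s - u) s) := by
        ext ω; simp only [Set.mem_setOf_eq, Set.mem_union, Set.mem_iUnion, Set.mem_preimage]
      rw [this]
      exact (MeasurableSet.const _).union
        (MeasurableSet.iUnion fun i => (hmeas i) measurableSet_Ioc)
    have hPE : ∀ u : ℝ, ∫⁻ ω, gfun (fun i => b i ω) (s, u) ∂P
        = ENNReal.ofReal u⁻¹ * P {ω | s < u ∨ ∃ i, b i ω ∈ Set.Ioc (s - u) s} := by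
      intro u
      rw [hind u, lintegral_indicator (hEmeas u), setLIntegral_const]
    have hsplit : Set.Ioc (0:ℝ) 1 = Set.Ioc 0 s ∪ Set.Ioc s 1 :=
      (Set.Ioc_union_Ioc_eq_Ioc (le_of_lt hs.1) hs.2).symm
    have hpart2 : ∫⁻ u in Set.Ioc s 1, ∫⁻ ω, gfun (fun i => b i ω) (s, u) ∂P
        = ENNReal.ofReal (- Real.log s) := by
      have h2 : ∀ u ∈ Set.Ioc s 1, ∫⁻ ω, gfun (fun i => b i ω) (s, u) ∂P
          = ENNReal.ofReal u⁻¹ := by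
        intro u hu
        rw [hPE u]
        have : {ω | s < u ∨ ∃ i, b i ω ∈ Set.Ioc (s - u) s} = Set.univ :=
          Set.eq_univ_of_forall fun ω => Or.inl hu.1
        rw [this, measure_univ, mul_one]
      rw [setLIntegral_congr_fun measurableSet_Ioc h2]
      exact lintegral_inv_Ioc hs.1 hs.2
    have hpart1 : ∫⁻ u in Set.Ioc 0 s, ∫⁻ ω, gfun (fun i => b i ω) (s, u) ∂P
        = ENNReal.ofReal (∑ j ∈ Finset.range (K-1),
            (1 - (1 - s) ^ (j + 1)) / ((j : ℝ) + 1)) := by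
      have hcongr : ∀ u ∈ Set.Ioc (0:ℝ) s, ∫⁻ ω, gfun (fun i => b i ω) (s, u) ∂P
          = ENNReal.ofReal (∑ j ∈ Finset.range (K-1), (1 - u) ^ j) := by
        intro u hu
        have hu1 : u ≤ 1 := le_trans hu.2 hs.2
        rw [hPE u]
        have hnotlt : ¬ s < u := not_lt.mpr hu.2
        have hEeq : {ω | s < u ∨ ∃ i, b i ω ∈ Set.Ioc (s - u) s}
            = ⋃ i, b i ⁻¹' (Set.Ioc (s - u) s) := by
          ext ω
          simp only [Set.mem_setOf_eq, Set.mem_iUnion, Set.mem_preimage]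
          exact or_iff_right hnotlt
        have hsub : Set.Ioc (s - u) s ⊆ Set.Icc (0:ℝ) 1 := by
          intro x hx
          constructor
          · linarith [hx.1, hu.2]
          · linarith [hx.2, hs.2]
        have hfac : ∀ i, P (b i ⁻¹' (Set.Ioc (s - u) s)) = ENNReal.ofReal u := by
          intro i
          rw [← Measure.map_apply (hmeas i) measurableSet_Ioc, hunif i,
            Measure.restrict_apply measurableSet_Ioc,
            Set.inter_eq_self_of_subset_left hsub, Real.volume_Ioc]
          congr 1; ring
        have hone : ∀ i, P (b i ⁻¹' (Set.Ioc (s - u) s)ᶜ) = ENNReal.ofReal (1 - u) := by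
          intro i
          rw [Set.preimage_compl, prob_compl_eq_one_sub ((hmeas i) measurableSet_Ioc),
            hfac i, ← ENNReal.ofReal_one, ← ENNReal.ofReal_sub 1 (le_of_lt hu.1)]
        have hcompl : P ((⋃ i, b i ⁻¹' (Set.Ioc (s - u) s))ᶜ)
            = ENNReal.ofReal ((1 - u) ^ (K-1)) := by
          rw [Set.compl_iUnion]
          have hBmeas : ∀ i : Fin (K-1),
              MeasurableSet[MeasurableSpace.comap (b i) inferInstance]
                (b i ⁻¹' (Set.Ioc (s - u) s)ᶜ) :=
            fun i => ⟨(Set.Ioc (s - u) s)ᶜ, measurableSet_Ioc.compl, rfl⟩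
          have hprod := hindep.meas_iInter hBmeas
          simp only [← Set.preimage_compl]
          rw [hprod, Finset.prod_congr rfl (fun i _ => hone i), Finset.prod_const,
            Finset.card_univ, Fintype.card_fin,
            ← ENNReal.ofReal_pow (by linarith [hu.2, hs.2] : (0:ℝ) ≤ 1 - u)]
        have hPU : P (⋃ i, b i ⁻¹' (Set.Ioc (s - u) s))
            = 1 - ENNReal.ofReal ((1 - u) ^ (K-1)) := by
          have hmeasU : MeasurableSet (⋃ i, b i ⁻¹' (Set.Ioc (s - u) s)) :=
            MeasurableSet.iUnion fun i => (hmeas i) measurableSet_Ioc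
          have := prob_compl_eq_one_sub (μ := P) hmeasU.compl
          rw [compl_compl, hcompl] at this
          rw [this]
        have h1u : (0:ℝ) ≤ 1 - u := by linarith [le_trans hu.2 hs.2]
        rw [hEeq, hPU,
          show (1:ℝ≥0∞) - ENNReal.ofReal ((1-u)^(K-1))
              = ENNReal.ofReal (1 - (1-u)^(K-1)) by
            rw [ENNReal.ofReal_sub 1 (pow_nonneg h1u _), ENNReal.ofReal_one],
          ← ENNReal.ofReal_mul (inv_nonneg.mpr (le_of_lt hu.1)),
          geom_aux (ne_of_gt hu.1) (K-1)]
      rw [setLIntegral_congr_fun measurableSet_Ioc hcongr]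
      have hInt : IntervalIntegrable (fun u => ∑ j ∈ Finset.range (K-1), (1 - u) ^ j)
          volume 0 s := by
        apply Continuous.intervalIntegrable
        exact continuous_finset_sum _ fun j _ => by fun_prop
      have hNonneg : ∀ u ∈ Set.Ioc (0:ℝ) s, 0 ≤ ∑ j ∈ Finset.range (K-1), (1 - u) ^ j := by
        intro u hu
        exact Finset.sum_nonneg fun j _ =>
          pow_nonneg (by linarith [le_trans hu.2 hs.2]) j
      rw [lintegral_ofReal_Ioc (le_of_lt hs.1) hInt hNonneg]
      congr 1
      rw [intervalIntegral.integral_finset_sum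
        (fun j _ => Continuous.intervalIntegrable (by fun_prop) _ _)]
      exact Finset.sum_congr rfl fun j _ => integral_pow_shift j
    have hXnn : 0 ≤ ∑ j ∈ Finset.range (K-1), (1 - (1 - s) ^ (j + 1)) / ((j : ℝ) + 1) :=
      Finset.sum_nonneg fun j _ => term_nonneg (le_of_lt hs.1) hs.2 j
    have hYnn : (0:ℝ) ≤ -Real.log s := by
      rw [neg_nonneg]; exact Real.log_nonpos (le_of_lt hs.1) hs.2
    rw [hν, hsplit, lintegral_union measurableSet_Ioc (Set.Ioc_disjoint_Ioc_of_le le_rfl),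
      hpart1, hpart2, ← ENNReal.ofReal_add hXnn hYnn]
    congr 1
  -- combine by Tonelli
  have hT2 : ∫⁻ ω, ∫⁻ s, ∫⁻ u, gfun (fun i => b i ω) (s, u) ∂ν ∂ν ∂P
      = ENNReal.ofReal (C₀ + 1) := by
    have hswap1 : ∫⁻ ω, ∫⁻ s, ∫⁻ u, gfun (fun i => b i ω) (s, u) ∂ν ∂ν ∂P
        = ∫⁻ s, ∫⁻ ω, ∫⁻ u, gfun (fun i => b i ω) (s, u) ∂ν ∂P ∂ν := by
      apply lintegral_lintegral_swap
      exact hFmeas.aemeasurable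
    rw [hswap1]
    have hswap2 : ∀ s : ℝ, ∫⁻ ω, ∫⁻ u, gfun (fun i => b i ω) (s, u) ∂ν ∂P
        = ∫⁻ u, ∫⁻ ω, gfun (fun i => b i ω) (s, u) ∂P ∂ν := by
      intro s
      apply lintegral_lintegral_swap
      refine Measurable.aemeasurable ?_
      exact hGmeas.comp ((measurable_const.prodMk measurable_snd).prodMk measurable_fst)
    rw [lintegral_congr hswap2]
    have : ∫⁻ s, (∫⁻ u, ∫⁻ ω, gfun (fun i => b i ω) (s, u) ∂P ∂ν) ∂ν
        = ∫⁻ s in Set.Ioc (0:ℝ) 1, ENNReal.ofReal ((∑ j ∈ Finset.range (K-1),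
          (1 - (1 - s) ^ (j + 1)) / ((j : ℝ) + 1)) - Real.log s) := by
      rw [hν]
      exact setLIntegral_congr_fun measurableSet_Ioc hQ1
    rw [this, Rn_lintegral (K-1), hC₀]
  have hT1 : ∫⁻ ω, ∫⁻ s, ∫⁻ u, gfun (fun i => b i ω) (s, u) ∂ν ∂ν ∂P
      = 1 + ∫⁻ ω, ENNReal.ofReal (W ω) ∂P := by
    rw [lintegral_congr hJ]
    have : ∀ ω, ENNReal.ofReal (1 + W ω) = 1 + ENNReal.ofReal (W ω) := by
      intro ω
      rw [ENNReal.ofReal_add zero_le_one (hWnonneg ω), ENNReal.ofReal_one]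
    rw [lintegral_congr this, lintegral_add_left measurable_const]
    simp
  have hWlint : ∫⁻ ω, ENNReal.ofReal (W ω) ∂P = ENNReal.ofReal C₀ := by
    have h1 : (1 : ℝ≥0∞) + ∫⁻ ω, ENNReal.ofReal (W ω) ∂P = 1 + ENNReal.ofReal C₀ := by
      rw [← hT1, hT2, ENNReal.ofReal_add hC₀nn zero_le_one, ENNReal.ofReal_one, add_comm]
    exact (ENNReal.add_right_inj ENNReal.one_ne_top).mp h1
  have hWint : ∫ ω, W ω ∂P = C₀ := by
    rw [integral_eq_lintegral_of_nonneg_ae (Filter.Eventually.of_forall hWnonneg)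
      hWmeas.aestronglyMeasurable, hWlint, ENNReal.toReal_ofReal hC₀nn]
  -- conclude
  have hinteq : ∀ ω, (-∑ k ∈ Finset.range K,
      (A ω (k + 1) - A ω k) * Real.logb 2 (A ω (k + 1) - A ω k))
      = (1 / Real.log 2) * W ω := by
    intro ω
    rw [hW]
    simp only [Real.logb, div_eq_mul_inv, Finset.mul_sum, mul_neg, neg_inj]
    exact Finset.sum_congr rfl fun k _ => by ring
  calc ∫ ω, (-∑ k ∈ Finset.range K,
        (A ω (k + 1) - A ω k) * Real.logb 2 (A ω (k + 1) - A ω k)) ∂P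
      = ∫ ω, (1 / Real.log 2) * W ω ∂P := by
        exact integral_congr_ae (Filter.Eventually.of_forall hinteq)
    _ = (1 / Real.log 2) * ∫ ω, W ω ∂P := by rw [integral_const_mul]
    _ = (1 / Real.log 2) * C₀ := by rw [hWint]
    _ = (1 / Real.log 2) * ∑ k ∈ Finset.Icc 2 K, (1 : ℝ) / k := by
        congr 1
        rw [hC₀]
        have hIcc : Finset.Icc 2 K =
            Finset.map ⟨(· + 2), add_left_injective 2⟩ (Finset.range (K-1)) := by
          ext x
          simp only [Finset.mem_Icc, Finset.mem_map, Finset.mem_range,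
            Function.Embedding.coeFn_mk]
          constructor
          · rintro ⟨h1, h2⟩
            exact ⟨x - 2, by omega, by omega⟩
          · rintro ⟨a, ha, rfl⟩
            omega
        rw [hIcc, Finset.sum_map]
        refine Finset.sum_congr rfl fun j _ => ?_
        simp only [Function.Embedding.coeFn_mk]
        push_cast
        ring_nf
end

section
/- For every positive integer n, 1/(24(n+1)²) ≤ H_n − γ − ln(n + 1/2) ≤ 1/(24 n²), where H_n is the n-th harmonic number and γ is the Euler–Mascheroni constant. -/
open Real Finset Filter Topology

private lemma key_abs' {y : ℝ} (h0 : 0 < y) (h1 : y < 1) :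
    |Real.log (1+y) - Real.log (1-y) - (2*y + 2*y^3/3 + 2*y^5/5)| ≤ 2*(y^7/(1-y)) := by
  have hy : |y| < 1 := by rw [abs_of_pos h0]; exact h1
  have hy' : |(-y)| < 1 := by rwa [abs_neg]
  have A := Real.abs_log_sub_add_sum_range_le hy 6
  have B := Real.abs_log_sub_add_sum_range_le hy' 6
  rw [abs_of_pos h0] at A
  rw [abs_neg, abs_of_pos h0] at B
  simp only [Finset.sum_range_succ, Finset.sum_range_zero] at A B
  norm_num at A B
  have e : Real.log (1+y) - Real.log (1-y) - (2*y + 2*y^3/3 + 2*y^5/5)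
      = (-y + y^2/2 + (-y)^3/3 + y^4/4 + (-y)^5/5 + y^6/6 + Real.log (1+y))
        - (y + y^2/2 + y^3/3 + y^4/4 + y^5/5 + y^6/6 + Real.log (1-y)) := by ring
  rw [e]
  calc |_ - _| ≤ |_| + |_| := abs_sub _ _
    _ ≤ y^7/(1-y) + y^7/(1-y) := add_le_add B A
    _ = 2*(y^7/(1-y)) := by ring

private lemma log_diff_bounds' (K : ℝ) (hK : 1 ≤ K) :
    |(Real.log (K+1+1/2) - Real.log (K+1/2))
        - (2*(1/(2*(K+1))) + 2*(1/(2*(K+1)))^3/3 + 2*(1/(2*(K+1)))^5/5)|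
      ≤ 2*((1/(2*(K+1)))^7/(1-(1/(2*(K+1))))) := by
  set y : ℝ := 1/(2*(K+1)) with hy
  have hK1 : (0:ℝ) < K + 1 := by linarith
  have h0 : 0 < y := by positivity
  have h1 : y < 1 := by rw [hy]; rw [div_lt_one (by linarith)]; linarith
  have e1 : (1:ℝ) + y = (K+1+1/2)/(K+1) := by rw [hy]; field_simp
  have e2 : (1:ℝ) - y = (K+1/2)/(K+1) := by rw [hy]; field_simp; ring
  have hk := key_abs' h0 h1
  rw [e1, e2, Real.log_div (by linarith) (by linarith),
    Real.log_div (by linarith) (by linarith)] at hk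
  rw [← e2] at hk
  have e3 : Real.log (K+1+1/2) - Real.log (K+1/2) - (2*y + 2*y^3/3 + 2*y^5/5)
      = Real.log (K+1+1/2) - Real.log (K+1) - (Real.log (K+1/2) - Real.log (K+1))
        - (2*y + 2*y^3/3 + 2*y^5/5) := by ring
  rw [e3]
  exact hk

private lemma term_bounds' (K : ℝ) (hK : 1 ≤ K) :
    1/(24*(K+1)^2) - 1/(24*(K+2)^2) ≤ (Real.log (K+1+1/2) - Real.log (K+1/2)) - 1/(K+1) ∧
    (Real.log (K+1+1/2) - Real.log (K+1/2)) - 1/(K+1) ≤ 1/(24*K^2) - 1/(24*(K+1)^2) := by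
  have hK0 : (0:ℝ) < K := by linarith
  have hK1 : (0:ℝ) < K + 1 := by linarith
  have hK2 : (0:ℝ) < K + 2 := by linarith
  have h2K1 : (0:ℝ) < 2*K + 1 := by linarith
  have habs := log_diff_bounds' K hK
  rw [abs_le] at habs
  obtain ⟨hlo, hhi⟩ := habs
  set y : ℝ := 1/(2*(K+1)) with hy
  have hE : 2*(y^7/(1-y)) = 1/(32*(K+1)^6*(2*K+1)) := by
    rw [hy]
    rw [show (1:ℝ) - 1/(2*(K+1)) = (2*K+1)/(2*(K+1)) by field_simp; ring]
    field_simp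
    ring
  have hS : 2*y + 2*y^3/3 + 2*y^5/5 = 1/(K+1) + 1/(12*(K+1)^3) + 1/(80*(K+1)^5) := by
    rw [hy]; field_simp; ring
  rw [hE, hS] at hlo hhi
  constructor
  · have halg : 1/(24*(K+1)^2) - 1/(24*(K+2)^2)
        ≤ 1/(12*(K+1)^3) + 1/(80*(K+1)^5) - 1/(32*(K+1)^6*(2*K+1)) := by
      rw [div_sub_div _ _ (by positivity) (by positivity),
        div_add_div _ _ (by positivity) (by positivity),
        div_sub_div _ _ (by positivity) (by positivity),
        div_le_div_iff₀ (by positivity) (by positivity)]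
      nlinarith [pow_nonneg hK0.le 2, pow_nonneg hK0.le 3, pow_nonneg hK0.le 4,
        pow_nonneg hK0.le 5, pow_nonneg hK0.le 6, pow_nonneg hK0.le 7, pow_nonneg hK0.le 8,
        pow_nonneg hK0.le 9, pow_nonneg hK0.le 10, pow_nonneg hK0.le 11, pow_nonneg hK0.le 12,
        pow_nonneg hK0.le 13]
    linarith
  · have halg : 1/(12*(K+1)^3) + 1/(80*(K+1)^5) + 1/(32*(K+1)^6*(2*K+1))
        ≤ 1/(24*K^2) - 1/(24*(K+1)^2) := by
      rw [div_add_div _ _ (by positivity) (by positivity),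
        div_add_div _ _ (by positivity) (by positivity),
        div_sub_div _ _ (by positivity) (by positivity),
        div_le_div_iff₀ (by positivity) (by positivity)]
      nlinarith [pow_nonneg hK0.le 2, pow_nonneg hK0.le 3, pow_nonneg hK0.le 4,
        pow_nonneg hK0.le 5, pow_nonneg hK0.le 6, pow_nonneg hK0.le 7, pow_nonneg hK0.le 8,
        pow_nonneg hK0.le 9, pow_nonneg hK0.le 10, pow_nonneg hK0.le 11, pow_nonneg hK0.le 12,
        pow_nonneg hK0.le 13]
    linarith

private lemma tele' (f : ℕ → ℝ) (n m : ℕ) (h : n ≤ m) :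
    ∑ k ∈ Finset.Ico n m, (f k - f (k+1)) = f n - f m := by
  induction m with
  | zero => interval_cases n; simp
  | succ m ih =>
    rcases Nat.lt_or_ge n (m+1) with h'|h'
    · rw [Finset.sum_Ico_succ_top (Nat.lt_succ_iff.mp h'), ih (Nat.lt_succ_iff.mp h')]; ring
    · have : n = m+1 := le_antisymm h h'
      subst this; simp

private noncomputable def gseq (m : ℕ) : ℝ :=
  (∑ k ∈ Finset.Icc 1 m, (1 : ℝ) / k) - Real.log ((m : ℝ) + 1 / 2)

private lemma gseq_step (k : ℕ) :
    gseq k - gseq (k+1)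
      = (Real.log ((k:ℝ)+1+1/2) - Real.log ((k:ℝ)+1/2)) - 1/((k:ℝ)+1) := by
  unfold gseq
  rw [Finset.sum_Icc_succ_top (by omega)]
  push_cast
  ring

private lemma tendsto_gseq : Tendsto gseq atTop (𝓝 Real.eulerMascheroniConstant) := by
  have hsum : ∀ m : ℕ, ((harmonic m : ℚ) : ℝ) = ∑ k ∈ Finset.Icc 1 m, (1:ℝ)/k := by
    intro m
    rw [harmonic_eq_sum_Icc]
    push_cast
    simp [one_div]
  have h1 : Tendsto (fun m : ℕ => ((harmonic m : ℚ) : ℝ) - Real.log m) atTop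
      (𝓝 Real.eulerMascheroniConstant) := Real.tendsto_harmonic_sub_log
  have h3 : Tendsto (fun x : ℝ => Real.log (1 + (1/2)/x)) atTop (𝓝 0) := by
    simpa only [add_zero, Real.log_one, id_eq] using
      ((tendsto_const_nhds.div_atTop tendsto_id).const_add (1:ℝ)).log (by norm_num)
  have h2 : Tendsto (fun m : ℕ => Real.log ((m:ℝ) + 1/2) - Real.log m) atTop (𝓝 0) := by
    apply (h3.comp tendsto_natCast_atTop_atTop).congr'
    filter_upwards [eventually_gt_atTop 0] with m hm
    have hm' : (0:ℝ) < m := by exact_mod_cast hm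
    rw [Function.comp_apply, ← Real.log_div (by positivity) (by positivity)]
    congr 1
    field_simp
  have := h1.sub h2
  rw [sub_zero] at this
  apply this.congr
  intro m
  rw [gseq, hsum m]
  ring

private lemma inv_sq_tendsto : Tendsto (fun m : ℕ => 1/(24*(m:ℝ)^2)) atTop (𝓝 0) := by
  have h : Tendsto (fun m : ℕ => 24*(m:ℝ)^2) atTop atTop := by
    apply Tendsto.const_mul_atTop (by norm_num : (0:ℝ) < 24)
    exact (tendsto_pow_atTop (two_ne_zero)).comp tendsto_natCast_atTop_atTop
  simpa only [one_div, Pi.inv_def] using h.inv_tendsto_atTop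

private lemma inv_sq_tendsto' : Tendsto (fun m : ℕ => 1/(24*((m:ℝ)+1)^2)) atTop (𝓝 0) := by
  have h : Tendsto (fun m : ℕ => 24*((m:ℝ)+1)^2) atTop atTop := by
    apply Tendsto.const_mul_atTop (by norm_num : (0:ℝ) < 24)
    exact (tendsto_pow_atTop (two_ne_zero)).comp
      (tendsto_atTop_add_const_right _ 1 tendsto_natCast_atTop_atTop)
  simpa only [one_div, Pi.inv_def] using h.inv_tendsto_atTop

theorem stmt_12 (n : ℕ) (hn : 1 ≤ n) :
    1 / (24 * ((n : ℝ) + 1) ^ 2) ≤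
        (∑ k ∈ Finset.Icc 1 n, (1 : ℝ) / k) - Real.eulerMascheroniConstant -
          Real.log ((n : ℝ) + 1 / 2) ∧
      (∑ k ∈ Finset.Icc 1 n, (1 : ℝ) / k) - Real.eulerMascheroniConstant -
          Real.log ((n : ℝ) + 1 / 2) ≤ 1 / (24 * (n : ℝ) ^ 2) := by
  have key : ∀ m : ℕ, n ≤ m →
      1/(24*((n:ℝ)+1)^2) - 1/(24*((m:ℝ)+1)^2) ≤ gseq n - gseq m ∧
      gseq n - gseq m ≤ 1/(24*(n:ℝ)^2) - 1/(24*(m:ℝ)^2) := by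
    intro m hm
    have htel : ∑ k ∈ Finset.Ico n m, (gseq k - gseq (k+1)) = gseq n - gseq m :=
      tele' gseq n m hm
    have htel1 : ∑ k ∈ Finset.Ico n m,
        ((fun k : ℕ => 1/(24*(k:ℝ)^2)) k - (fun k : ℕ => 1/(24*(k:ℝ)^2)) (k+1))
        = 1/(24*(n:ℝ)^2) - 1/(24*(m:ℝ)^2) := tele' _ n m hm
    have htel2 : ∑ k ∈ Finset.Ico n m,
        ((fun k : ℕ => 1/(24*((k:ℝ)+1)^2)) k - (fun k : ℕ => 1/(24*((k:ℝ)+1)^2)) (k+1))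
        = 1/(24*((n:ℝ)+1)^2) - 1/(24*((m:ℝ)+1)^2) := tele' _ n m hm
    constructor
    · rw [← htel, ← htel2]
      apply Finset.sum_le_sum
      intro k hk
      rw [Finset.mem_Ico] at hk
      have hk1 : (1:ℝ) ≤ (k:ℝ) := by exact_mod_cast le_trans hn hk.1
      have := (term_bounds' (k:ℝ) hk1).1
      rw [gseq_step]
      push_cast
      convert this using 2 <;> push_cast
      · rfl
      · ring
    · rw [← htel, ← htel1]
      apply Finset.sum_le_sum
      intro k hk
      rw [Finset.mem_Ico] at hk
      have hk1 : (1:ℝ) ≤ (k:ℝ) := by exact_mod_cast le_trans hn hk.1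
      have := (term_bounds' (k:ℝ) hk1).2
      rw [gseq_step]
      push_cast
      convert this using 2 <;> push_cast <;> ring
  have hlim : Tendsto (fun m : ℕ => gseq n - gseq m) atTop
      (𝓝 (gseq n - Real.eulerMascheroniConstant)) :=
    tendsto_const_nhds.sub tendsto_gseq
  have hupper : gseq n - Real.eulerMascheroniConstant ≤ 1/(24*(n:ℝ)^2) := by
    have hrhs : Tendsto (fun m : ℕ => 1/(24*(n:ℝ)^2) - 1/(24*(m:ℝ)^2)) atTop
        (𝓝 (1/(24*(n:ℝ)^2))) := by
      simpa only [sub_zero] using (tendsto_const_nhds (x := 1/(24*(n:ℝ)^2)) (f := atTop)).sub inv_sq_tendsto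
    refine le_of_tendsto_of_tendsto hlim hrhs ?_
    filter_upwards [eventually_ge_atTop n] with m hm
    exact (key m hm).2
  have hlower : 1/(24*((n:ℝ)+1)^2) ≤ gseq n - Real.eulerMascheroniConstant := by
    have hrhs : Tendsto (fun m : ℕ => 1/(24*((n:ℝ)+1)^2) - 1/(24*((m:ℝ)+1)^2)) atTop
        (𝓝 (1/(24*((n:ℝ)+1)^2))) := by
      simpa only [sub_zero] using (tendsto_const_nhds (x := 1/(24*((n:ℝ)+1)^2)) (f := atTop)).sub inv_sq_tendsto'
    refine le_of_tendsto_of_tendsto hrhs hlim ?_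
    filter_upwards [eventually_ge_atTop n] with m hm
    exact (key m hm).1
  have hg : gseq n - Real.eulerMascheroniConstant
      = (∑ k ∈ Finset.Icc 1 n, (1 : ℝ) / k) - Real.eulerMascheroniConstant -
        Real.log ((n : ℝ) + 1 / 2) := by
    rw [gseq]; ring
  rw [hg] at hupper hlower
  exact ⟨hlower, hupper⟩
end

section
/- With M = min(a₁, Δ₀) for a₁ ~ Uniform[0, Δ₁) and 0 < Δ₀ < Δ₁, and L length-biased from M, E[−log₂ L] = log₂(1/Δ₀) + (1/(2 ln 2)) · Δ₀/(2Δ₁ − Δ₀). -/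
open MeasureTheory
open scoped NNReal ENNReal

lemma my_integral_xlog (a : ℝ) (ha : 0 < a) :
    ∫ x in (0:ℝ)..a, x * Real.log x = a^2/2 * Real.log a - a^2/4 := by
  have h := intervalIntegral.integral_eq_sub_of_hasDerivAt_of_le ha.le
    (f := fun x => x/2 * (x * Real.log x) - x^2/4)
    (f' := fun x => x * Real.log x)
    (by
      apply ContinuousOn.sub
      · exact ((continuous_id.div_const 2).mul Real.continuous_mul_log).continuousOn
      · exact ((continuous_pow 2).div_const 4).continuousOn)
    (by
      intro x hx
      have hx0 : x ≠ 0 := ne_of_gt hx.1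
      have h1 : HasDerivAt (fun x : ℝ => x/2) (1/2) x := (hasDerivAt_id x).div_const 2
      have h2 := Real.hasDerivAt_mul_log hx0
      have h3 : HasDerivAt (fun x : ℝ => x^2/4) (2 * x^(2-1) * 1 / 4) x :=
        ((hasDerivAt_id x).pow 2).div_const 4
      have := (h1.mul h2).sub h3
      convert this using 1
      · rfl
      · simp only [show (2:ℕ) - 1 = 1 from rfl, pow_one]
        ring)
    (Real.continuous_mul_log.intervalIntegrable 0 a)
  rw [h]
  field_simp
  ring

lemma my_map_integral (Δ₀ Δ₁ : ℝ) (h0 : 0 < Δ₀) (h01 : Δ₀ < Δ₁) (g : ℝ → ℝ)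
    (hg : Continuous g) :
    ∫ m, g m ∂(Measure.map (fun x => min x Δ₀)
        ((ENNReal.ofReal Δ₁)⁻¹ • volume.restrict (Set.Ico 0 Δ₁)))
      = Δ₁⁻¹ * ((∫ x in (0:ℝ)..Δ₀, g x) + (Δ₁ - Δ₀) * g Δ₀) := by
  have h1 : 0 < Δ₁ := h0.trans h01
  have hmin : Continuous fun x : ℝ => min x Δ₀ := continuous_id.min continuous_const
  rw [integral_map hmin.aemeasurable (hg.aestronglyMeasurable), integral_smul_measure]
  have htr : ((ENNReal.ofReal Δ₁)⁻¹).toReal = Δ₁⁻¹ := by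
    rw [ENNReal.toReal_inv, ENNReal.toReal_ofReal h1.le]
  rw [htr]
  have hIco : ∫ x in Set.Ico 0 Δ₁, g (min x Δ₀) = ∫ x in (0:ℝ)..Δ₁, g (min x Δ₀) := by
    rw [MeasureTheory.integral_Ico_eq_integral_Ioo, intervalIntegral.integral_of_le h1.le,
      MeasureTheory.integral_Ioc_eq_integral_Ioo]
  rw [hIco]
  have hii : ∀ u v : ℝ, IntervalIntegrable (fun x => g (min x Δ₀)) volume u v :=
    fun u v => (hg.comp hmin).intervalIntegrable u v
  rw [← intervalIntegral.integral_add_adjacent_intervals (hii 0 Δ₀) (hii Δ₀ Δ₁)]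
  have e1 : ∫ x in (0:ℝ)..Δ₀, g (min x Δ₀) = ∫ x in (0:ℝ)..Δ₀, g x := by
    apply intervalIntegral.integral_congr
    intro x hx
    rw [Set.uIcc_of_le h0.le] at hx
    simp [min_eq_left hx.2]
  have e2 : ∫ x in Δ₀..Δ₁, g (min x Δ₀) = (Δ₁ - Δ₀) * g Δ₀ := by
    have : ∫ x in Δ₀..Δ₁, g (min x Δ₀) = ∫ _x in Δ₀..Δ₁, g Δ₀ := by
      apply intervalIntegral.integral_congr
      intro x hx
      rw [Set.uIcc_of_le h01.le] at hx
      simp [min_eq_right hx.1]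
    rw [this, intervalIntegral.integral_const, smul_eq_mul]
  rw [e1, e2, smul_eq_mul]

theorem stmt_16 (Δ₀ Δ₁ : ℝ) (h0 : 0 < Δ₀) (h01 : Δ₀ < Δ₁) :
    let μa : Measure ℝ := (ENNReal.ofReal Δ₁)⁻¹ • volume.restrict (Set.Ico 0 Δ₁)
    let μM : Measure ℝ := Measure.map (fun x => min x Δ₀) μa
    let EM : ℝ := ∫ m, m ∂μM
    let μL : Measure ℝ := μM.withDensity (fun m => ENNReal.ofReal (m / EM))
    (∫ ℓ, -Real.logb 2 ℓ ∂μL) =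
      Real.logb 2 (1 / Δ₀) + (1 / (2 * Real.log 2)) * (Δ₀ / (2 * Δ₁ - Δ₀)) := by
  intro μa μM EM μL
  have h1 : 0 < Δ₁ := h0.trans h01
  have hlog2 : Real.log 2 ≠ 0 := by
    have := Real.log_pos (by norm_num : (1:ℝ) < 2); linarith
  -- compute EM
  have hEM : EM = Δ₀ * (2*Δ₁ - Δ₀) / (2*Δ₁) := by
    show (∫ m, m ∂μM) = _
    rw [show (fun m : ℝ => m) = id from rfl]
    rw [my_map_integral Δ₀ Δ₁ h0 h01 id continuous_id]
    simp only [id]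
    rw [integral_id]
    field_simp
    ring
  have hEMpos : 0 < EM := by
    rw [hEM]; exact div_pos (mul_pos h0 (by linarith)) (by linarith)
  -- reduce withDensity integral
  set f' : ℝ → ℝ≥0 := fun m => Real.toNNReal (m / EM) with hf'
  have hwd : (∫ ℓ, -Real.logb 2 ℓ ∂μL)
      = ∫ m, f' m • (-Real.logb 2 m) ∂μM := by
    have hfmeas : Measurable f' := (measurable_id.div_const EM).real_toNNReal
    have : μL = μM.withDensity (fun m => (f' m : ℝ≥0∞)) := rfl
    rw [this, integral_withDensity_eq_integral_smul hfmeas]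
  -- remove the max via a.e. nonnegativity
  have hae : ∀ᵐ m ∂μM, 0 ≤ m := by
    have hmin : Measurable fun x : ℝ => min x Δ₀ :=
      (continuous_id.min continuous_const).measurable
    rw [show μM = Measure.map (fun x => min x Δ₀) μa from rfl]
    rw [MeasureTheory.ae_map_iff hmin.aemeasurable measurableSet_Ici]
    refine Measure.ae_smul_measure ?_ _
    filter_upwards [ae_restrict_mem measurableSet_Ico] with x hx
    exact Set.mem_Ici.mpr (le_min hx.1 h0.le)
  have hcong : (∫ m, f' m • (-Real.logb 2 m) ∂μM)
      = ∫ m, (-(1/(EM * Real.log 2))) * (m * Real.log m) ∂μM := by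
    apply integral_congr_ae
    filter_upwards [hae] with m hm
    have hc : (f' m : ℝ) = m / EM :=
      Real.coe_toNNReal _ (div_nonneg hm hEMpos.le)
    rw [NNReal.smul_def, smul_eq_mul, hc]
    simp only [Real.logb]
    field_simp
  rw [hwd, hcong]
  rw [my_map_integral Δ₀ Δ₁ h0 h01 (fun m => (-(1/(EM * Real.log 2))) * (m * Real.log m))
    (continuous_const.mul Real.continuous_mul_log)]
  rw [intervalIntegral.integral_const_mul, my_integral_xlog Δ₀ h0]
  simp only [Real.logb, one_div, Real.log_inv]
  have h2 : (2*Δ₁ - Δ₀) ≠ 0 := by intro h; linarith [h01, h0]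
  rw [hEM]
  have h2' : Δ₁ * 2 - Δ₀ ≠ 0 := by intro h; linarith [h01, h0]
  field_simp
  ring
end

section
/- For θ ∈ (0, π/4], the function q_θ = ((1 − (3/4)tan θ)/(1 − (1/2)tan θ)) · exp(tan θ/(2 − tan θ)) is at most e/2, with equality at θ = π/4. -/
open Real

theorem stmt_17 :
    (∀ θ ∈ Set.Ioc (0:ℝ) (π / 4),
        ((1 - (3 / 4) * tan θ) / (1 - (1 / 2) * tan θ)) *
            Real.exp (tan θ / (2 - tan θ)) ≤ Real.exp 1 / 2) ∧
      ((1 - (3 / 4) * tan (π / 4)) / (1 - (1 / 2) * tan (π / 4))) *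
          Real.exp (tan (π / 4) / (2 - tan (π / 4))) = Real.exp 1 / 2 := by
  constructor
  · intro θ hθ
    have hpi := Real.pi_pos
    have ht1 : tan θ ≤ 1 := by
      rw [← Real.tan_pi_div_four]
      rcases eq_or_lt_of_le hθ.2 with h | h
      · rw [h]
      · exact le_of_lt (Real.tan_lt_tan_of_lt_of_lt_pi_div_two
          (by linarith [hθ.1]) (by linarith) h)
    set t := tan θ with htdef
    have h2t : (0:ℝ) < 2 - t := by linarith
    have h1t : (0:ℝ) < 1 - (1/2) * t := by linarith
    set u := t / (2 - t) with hu
    have key : (2 - u) * Real.exp u ≤ Real.exp 1 := by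
      have h1 := Real.add_one_le_exp (1 - u)
      calc (2 - u) * Real.exp u ≤ Real.exp (1 - u) * Real.exp u := by
            apply mul_le_mul_of_nonneg_right (by linarith) (Real.exp_pos u).le
        _ = Real.exp 1 := by rw [← Real.exp_add]; ring_nf
    have heq : ((1 - (3/4) * t) / (1 - (1/2) * t)) * Real.exp u
        = (2 - u) * Real.exp u / 2 := by
      rw [hu]
      field_simp
      ring
    rw [heq]
    linarith
  · rw [Real.tan_pi_div_four]
    norm_num
    ring
end

section
/- For t ∈ [0,1], the function g(t) = ((1 − (3/4)t)/(1 − (1/2)t)) · exp(t/(2 − t)) is monotonically increasing on [0,1], with g(0) = 1 and g(1) = e/2. -/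
lemma g_hasDerivAt (t : ℝ) (h2 : (2:ℝ) - t ≠ 0) (h1 : (1:ℝ) - (1/2)*t ≠ 0) :
    HasDerivAt (fun t : ℝ => ((1 - (3 / 4) * t) / (1 - (1 / 2) * t)) * Real.exp (t / (2 - t)))
      (2 * Real.exp (t / (2 - t)) * (1 - t) / (2 - t) ^ 3) t := by
  have hq : HasDerivAt (fun t : ℝ => (1 - (3/4)*t) / (1 - (1/2)*t))
      (((-(3/4)) * (1 - (1/2)*t) - (1 - (3/4)*t) * (-(1/2))) / (1 - (1/2)*t)^2) t := by
    exact HasDerivAt.div (by simpa using ((hasDerivAt_id t).const_mul (3/4:ℝ)).const_sub 1)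
      (by simpa using ((hasDerivAt_id t).const_mul (1/2:ℝ)).const_sub 1) h1
  have hr : HasDerivAt (fun t : ℝ => t / (2 - t))
      ((1 * (2 - t) - t * (-1)) / (2 - t)^2) t := by
    exact HasDerivAt.div (hasDerivAt_id t) (by simpa using (hasDerivAt_id t).const_sub 2) h2
  have he := hr.exp
  have h : HasDerivAt (fun t : ℝ => ((1 - (3 / 4) * t) / (1 - (1 / 2) * t)) * Real.exp (t / (2 - t)))
      (((-(3/4)) * (1 - (1/2)*t) - (1 - (3/4)*t) * (-(1/2))) / (1 - (1/2)*t)^2 * Real.exp (t / (2 - t)) +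
        (1 - (3/4)*t) / (1 - (1/2)*t) * (Real.exp (t / (2 - t)) * ((1 * (2 - t) - t * (-1)) / (2 - t)^2))) t :=
    hq.mul he
  convert h using 1
  have h2' : (2:ℝ) - t ≠ 0 := h2
  field_simp
  ring

theorem stmt_19 :
    MonotoneOn
        (fun t : ℝ => ((1 - (3 / 4) * t) / (1 - (1 / 2) * t)) * Real.exp (t / (2 - t)))
        (Set.Icc 0 1) ∧
      ((1 - (3 / 4) * (0:ℝ)) / (1 - (1 / 2) * (0:ℝ))) * Real.exp ((0:ℝ) / (2 - 0)) = 1 ∧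
      ((1 - (3 / 4) * (1:ℝ)) / (1 - (1 / 2) * (1:ℝ))) * Real.exp ((1:ℝ) / (2 - 1)) =
        Real.exp 1 / 2 := by
  refine ⟨?_, by norm_num, by norm_num; ring⟩
  have key : ∀ t ∈ Set.Icc (0:ℝ) 1, (2:ℝ) - t ≠ 0 ∧ (1:ℝ) - (1/2)*t ≠ 0 := by
    rintro t ⟨h0, h1⟩
    constructor <;> nlinarith
  have hcont : ContinuousOn
      (fun t : ℝ => ((1 - (3 / 4) * t) / (1 - (1 / 2) * t)) * Real.exp (t / (2 - t)))
      (Set.Icc 0 1) := by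
    apply ContinuousOn.mul
    · exact ContinuousOn.div (by fun_prop) (by fun_prop) (fun t ht => (key t ht).2)
    · exact (ContinuousOn.div (by fun_prop) (by fun_prop) (fun t ht => (key t ht).1)).rexp
  have hd : ∀ t ∈ interior (Set.Icc (0:ℝ) 1),
      0 < deriv (fun t : ℝ => ((1 - (3 / 4) * t) / (1 - (1 / 2) * t)) * Real.exp (t / (2 - t))) t := by
    intro t ht
    rw [interior_Icc] at ht
    obtain ⟨h0, h1⟩ := ht
    have h2 : (0:ℝ) < 2 - t := by linarith
    have hh1 : (1:ℝ) - (1/2)*t ≠ 0 := by nlinarith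
    rw [(g_hasDerivAt t (ne_of_gt h2) hh1).deriv]
    exact div_pos (mul_pos (by positivity) (by linarith)) (pow_pos h2 3)
  exact (StrictMonoOn.monotoneOn (strictMonoOn_of_deriv_pos (convex_Icc 0 1) hcont hd))
end
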